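/- Let $\{r_j\}_{j\ge 1}$ be given by $r_j=r_0\theta^j$ with $0<\theta<1$, let $l>0$, let $\{s_j\}_{j\ge 1}$ be a decreasing positive sequence, and suppose $r_j^l\le c_0' s_j^{\alpha}$ for all $j\ge 1$ and some constants $c_0'>0$ and positive integer $\alpha$. Let $\{h_j\}_{j\ge 1}$ be real-valued functions on a set $\Pi_0\subset\mathbb{R}^n$, with $h_j$ defined and $\alpha$-times continuously differentiable on the open $s_j$-neighbourhood $\Pi_j$ of $\Pi_0$, and assume $\sup_{\Pi_j}|\partial^\beta h_j|\le M r_j^l$ for all multi-indices $|\beta|_1\le\alpha$. Fix a multi-index $\beta$ with $|\beta|_1\le\alpha-1$ and define, for $\xi,\zeta\in\Pi_0$, $R_j^\beta(\xi,\zeta)=\partial^\beta h_j(\xi)-\sum_{|\beta+k|_1\le\alpha-1}\frac{1}{k!}\partial^{\beta+k}h_j(\zeta)(\xi-\zeta)^k$. Then there is a constant $C$ (depending only on $l,n,\theta,\alpha,c_0'$) such that $\sum_{j=1}^{\infty}|R_j^\beta(\xi,\zeta)|\le C M|\xi-\zeta|^{\alpha-|\beta|_1}$ for all $\xi,\zeta\in\Pi_0$.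 -/

import Mathlib

open Set

/-- Directional derivative in the `i`-th coordinate direction. -/
noncomputable def pdirP {n : ℕ} (i : Fin n) (g : (Fin n → ℝ) → ℝ) : (Fin n → ℝ) → ℝ :=
  fun x => fderiv ℝ g x (Pi.single i 1)

/-- Multi-index partial derivative `∂^β`. -/
noncomputable def pmultiP {n : ℕ} (β : Fin n → ℕ) (g : (Fin n → ℝ) → ℝ) :
    (Fin n → ℝ) → ℝ :=
  (List.finRange n).foldr (fun i h => (pdirP i)^[β i] h) g

/-- The Taylor remainder `R_j^β(ξ,ζ)` of `∂^β h_j` at `ζ` of order `α-1-|β|₁`. -/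
noncomputable def taylorRem {n α : ℕ} (β : Fin n → ℕ) (h : (Fin n → ℝ) → ℝ)
    (ξ ζ : Fin n → ℝ) : ℝ :=
  pmultiP β h ξ -
    ∑ k ∈ (Finset.Iic (fun _ : Fin n => α)).filter
        (fun k : Fin n → ℕ => (∑ i, β i) + (∑ i, k i) ≤ α - 1),
      (∏ i, ((k i).factorial : ℝ))⁻¹ * pmultiP (β + k) h ζ * ∏ i, (ξ i - ζ i) ^ (k i)

namespace IAR

variable {n : ℕ}

noncomputable def pdirList (L : List (Fin n)) (g : (Fin n → ℝ) → ℝ) : (Fin n → ℝ) → ℝ :=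
  L.foldr pdirP g

lemma pdirList_nil (g : (Fin n → ℝ) → ℝ) : pdirList ([] : List (Fin n)) g = g := rfl

lemma pdirList_cons (i : Fin n) (L : List (Fin n)) (g : (Fin n → ℝ) → ℝ) :
    pdirList (i :: L) g = pdirP i (pdirList L g) := rfl

lemma pdirList_append (L1 L2 : List (Fin n)) (g : (Fin n → ℝ) → ℝ) :
    pdirList (L1 ++ L2) g = pdirList L1 (pdirList L2 g) :=
  List.foldr_append

lemma pdirList_replicate (k : ℕ) (i : Fin n) (g : (Fin n → ℝ) → ℝ) :
    pdirList (List.replicate k i) g = (pdirP i)^[k] g := by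
  induction k with
  | zero => rfl
  | succ k ih =>
    rw [List.replicate_succ, pdirList_cons, ih, Function.iterate_succ_apply']

lemma pmultiP_eq_pdirList (β : Fin n → ℕ) (g : (Fin n → ℝ) → ℝ) :
    pmultiP β g = pdirList ((List.finRange n).flatMap fun i => List.replicate (β i) i) g := by
  unfold pmultiP
  generalize List.finRange n = L
  induction L with
  | nil => rfl
  | cons i L ih =>
    rw [List.foldr_cons, List.flatMap_cons, pdirList_append, ← ih, pdirList_replicate]

lemma length_flat (β : Fin n → ℕ) :
    ((List.finRange n).flatMap fun i => List.replicate (β i) i).length = ∑ i, β i := by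
  rw [List.length_flatMap, Fin.sum_univ_def]
  congr 1
  exact List.map_congr_left fun i _ => List.length_replicate

lemma contDiffOn_pdirP {m : ℕ} {U : Set (Fin n → ℝ)} (hU : IsOpen U) {g : (Fin n → ℝ) → ℝ}
    (hg : ContDiffOn ℝ ((m + 1 : ℕ)) g U) (i : Fin n) : ContDiffOn ℝ (m : ℕ) (pdirP i g) U := by
  have h1 : ContDiffOn ℝ (m : ℕ) (fderiv ℝ g) U :=
    hg.fderiv_of_isOpen hU (by exact_mod_cast le_rfl)
  exact h1.clm_apply contDiffOn_const

lemma contDiffOn_pdirList {U : Set (Fin n → ℝ)} (hU : IsOpen U) (L : List (Fin n)) :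
    ∀ (m : ℕ) (g : (Fin n → ℝ) → ℝ), ContDiffOn ℝ ((m + L.length : ℕ)) g U →
      ContDiffOn ℝ (m : ℕ) (pdirList L g) U := by
  induction L with
  | nil => intro m g hg; simpa [pdirList_nil] using hg
  | cons i L ih =>
    intro m g hg
    rw [pdirList_cons]
    refine contDiffOn_pdirP hU (ih (m + 1) g ?_) i
    rwa [show m + 1 + L.length = m + (i :: L).length by simp only [List.length_cons]; omega]

lemma contDiffOn_pmultiP {U : Set (Fin n → ℝ)} (hU : IsOpen U) {m : ℕ} (β : Fin n → ℕ)
    {g : (Fin n → ℝ) → ℝ} (hg : ContDiffOn ℝ ((m + ∑ i, β i : ℕ)) g U) :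
    ContDiffOn ℝ (m : ℕ) (pmultiP β g) U := by
  rw [pmultiP_eq_pdirList]
  apply contDiffOn_pdirList hU _ m g
  rwa [length_flat]

lemma diffAt_of_contDiffOn {U : Set (Fin n → ℝ)} (hU : IsOpen U) {g : (Fin n → ℝ) → ℝ} {m : ℕ}
    (hm : 1 ≤ m) (hg : ContDiffOn ℝ (m : ℕ) g U) {x : Fin n → ℝ} (hx : x ∈ U) :
    DifferentiableAt ℝ g x :=
  (hg.contDiffAt (hU.mem_nhds hx)).differentiableAt (by exact_mod_cast (show m ≠ 0 by omega))

lemma fderiv_apply_eq_sum {g : (Fin n → ℝ) → ℝ} {x : Fin n → ℝ}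
    (hg : DifferentiableAt ℝ g x) (v : Fin n → ℝ) :
    fderiv ℝ g x v = ∑ i, v i * pdirP i g x := by
  have hv : (∑ i, v i • (Pi.single i (1:ℝ) : Fin n → ℝ)) = v := by
    funext j
    rw [Finset.sum_apply]
    simp [Pi.single_apply]
  conv_lhs => rw [← hv]
  rw [map_sum]
  simp [pdirP, smul_eq_mul]

lemma pdirP_comm {U : Set (Fin n → ℝ)} (hU : IsOpen U) {g : (Fin n → ℝ) → ℝ}
    (hg : ContDiffOn ℝ ((2:ℕ)) g U) (i j : Fin n) {x : Fin n → ℝ} (hx : x ∈ U) :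
    pdirP i (pdirP j g) x = pdirP j (pdirP i g) x := by
  have hat : ContDiffAt ℝ ((2:ℕ)) g x := hg.contDiffAt (hU.mem_nhds hx)
  have hsym := hat.isSymmSndFDerivAt (by norm_num)
  have hd : DifferentiableAt ℝ (fderiv ℝ g) x := by
    have h1 : ContDiffAt ℝ (1:ℕ) (fderiv ℝ g) x := hat.fderiv_right (by norm_num)
    exact h1.differentiableAt (by norm_num)
  have h1 : ∀ (w v : Fin n → ℝ), fderiv ℝ (fun y => fderiv ℝ g y w) x v
      = fderiv ℝ (fderiv ℝ g) x v w := by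
    intro w v
    rw [fderiv_clm_apply hd (differentiableAt_const w)]
    simp
  show fderiv ℝ (fun y => fderiv ℝ g y (Pi.single j 1)) x (Pi.single i 1)
    = fderiv ℝ (fun y => fderiv ℝ g y (Pi.single i 1)) x (Pi.single j 1)
  rw [h1, h1]
  exact hsym _ _

lemma pdirP_pdirList_comm {U : Set (Fin n → ℝ)} (hU : IsOpen U) (L : List (Fin n)) :
    ∀ (m : ℕ) (g : (Fin n → ℝ) → ℝ), ContDiffOn ℝ (m : ℕ) g U → L.length + 1 ≤ m →
      ∀ (i : Fin n), ∀ x ∈ U, pdirP i (pdirList L g) x = pdirList L (pdirP i g) x := by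
  induction L with
  | nil => intro m g hg hm i x hx; rfl
  | cons j L ih =>
    intro m g hg hm i x hx
    simp only [List.length_cons] at hm
    have hL1 : ContDiffOn ℝ ((2 + L.length : ℕ)) g U :=
      hg.of_le (by exact_mod_cast (by omega : 2 + L.length ≤ m))
    have hLg : ContDiffOn ℝ ((2:ℕ)) (pdirList L g) U := contDiffOn_pdirList hU L 2 g hL1
    have step1 : pdirP i (pdirP j (pdirList L g)) x = pdirP j (pdirP i (pdirList L g)) x :=
      pdirP_comm hU hLg i j hx
    have heq : Set.EqOn (pdirP i (pdirList L g)) (pdirList L (pdirP i g)) U :=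
      fun y hy => ih m g hg (by omega) i y hy
    have step2 : pdirP j (pdirP i (pdirList L g)) x = pdirP j (pdirList L (pdirP i g)) x := by
      unfold pdirP
      congr 1
      exact Filter.EventuallyEq.fderiv_eq (heq.eventuallyEq_of_mem (hU.mem_nhds hx))
    exact step1.trans step2


lemma pdirP_pmultiP {U : Set (Fin n → ℝ)} (hU : IsOpen U) {α : ℕ} {h : (Fin n → ℝ) → ℝ}
    (hh : ContDiffOn ℝ ((α:ℕ)) h U) (β : Fin n → ℕ) (hβ : (∑ i, β i) + 1 ≤ α) (i : Fin n)
    {x : Fin n → ℝ} (hx : x ∈ U) :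
    pdirP i (pmultiP β h) x = pmultiP (β + Pi.single i 1) h x := by
  classical
  obtain ⟨P, Q, hPQ⟩ := List.append_of_mem (List.mem_finRange i)
  have hnd : (P ++ i :: Q).Nodup := hPQ ▸ List.nodup_finRange n
  have hiP : i ∉ P := fun hmem =>
    (List.disjoint_of_nodup_append hnd) hmem (List.mem_cons_self : i ∈ i :: Q)
  have hiQ : i ∉ Q := by
    have h2 : (i :: Q).Nodup := hnd.of_append_right
    exact (List.nodup_cons.mp h2).1
  set f : Fin n → List (Fin n) := fun j => List.replicate (β j) j with hf
  set f' : Fin n → List (Fin n) := fun j => List.replicate ((β + (Pi.single i 1 : Fin n → ℕ)) j) j with hf'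
  have hcong : ∀ (R : List (Fin n)), i ∉ R → R.flatMap f' = R.flatMap f := by
    intro R hiR
    induction R with
    | nil => rfl
    | cons a R ihR =>
      rw [List.flatMap_cons, List.flatMap_cons,
        ihR (fun hm => hiR (List.mem_cons_of_mem a hm))]
      congr 1
      have ha : a ≠ i := fun hEq => hiR (hEq ▸ (List.mem_cons_self : a ∈ a :: R))
      simp [hf, hf', Pi.add_apply, Pi.single_eq_of_ne ha]
  have hfi : f' i = i :: f i := by
    have hval : (β + (Pi.single i 1 : Fin n → ℕ)) i = β i + 1 := by
      simp [Pi.add_apply, Pi.single_eq_same]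
    simp only [hf, hf', hval]
    rw [List.replicate_succ]
  have e1 : pmultiP β h = pdirList (P.flatMap f) (pdirList (f i ++ Q.flatMap f) h) := by
    rw [pmultiP_eq_pdirList, hPQ, List.flatMap_append, List.flatMap_cons, pdirList_append,
      pdirList_append]
  have e2 : pmultiP (β + Pi.single i 1) h
      = pdirList (P.flatMap f) (pdirP i (pdirList (f i ++ Q.flatMap f) h)) := by
    have hfi2 : List.replicate ((β + (Pi.single i 1 : Fin n → ℕ)) i) i
        = i :: List.replicate (β i) i := by
      have hval : (β + (Pi.single i 1 : Fin n → ℕ)) i = β i + 1 := by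
        simp [Pi.add_apply, Pi.single_eq_same]
      rw [hval, List.replicate_succ]
    rw [pmultiP_eq_pdirList, hPQ, List.flatMap_append, List.flatMap_cons, hcong P hiP,
      hcong Q hiQ, hfi2, List.cons_append, pdirList_append, pdirList_cons, pdirList_append]
  have hlen : (P.flatMap f).length + (f i ++ Q.flatMap f).length = ∑ j, β j := by
    have hl := length_flat β
    rw [hPQ, List.flatMap_append, List.flatMap_cons] at hl
    simp only [List.length_append, List.length_flatMap, List.length_replicate, hf,
      Function.comp] at hl ⊢
    omega
  have hG : ContDiffOn ℝ
      (((P.flatMap f).length + 1 + (f i ++ Q.flatMap f).length : ℕ)) h U :=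
    hh.of_le (by exact_mod_cast (by omega :
      (P.flatMap f).length + 1 + (f i ++ Q.flatMap f).length ≤ α))
  have hG2 : ContDiffOn ℝ (((P.flatMap f).length + 1 : ℕ))
      (pdirList (f i ++ Q.flatMap f) h) U :=
    contDiffOn_pdirList hU _ _ _ hG
  rw [e1, e2]
  exact pdirP_pdirList_comm hU (P.flatMap f) _ _ hG2 le_rfl i x hx

noncomputable def Sset (n α : ℕ) (β : Fin n → ℕ) : Finset (Fin n → ℕ) :=
  (Finset.Iic (fun _ : Fin n => α)).filter
    (fun k : Fin n → ℕ => (∑ i, β i) + (∑ i, k i) ≤ α - 1)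

noncomputable def polyP (α : ℕ) (β : Fin n → ℕ) (h : (Fin n → ℝ) → ℝ) (ζ : Fin n → ℝ) :
    (Fin n → ℝ) → ℝ :=
  fun ξ => ∑ k ∈ Sset n α β,
    (∏ i, ((k i).factorial : ℝ))⁻¹ * pmultiP (β + k) h ζ * ∏ i, (ξ i - ζ i) ^ (k i)

lemma taylorRem_eq (α : ℕ) (β : Fin n → ℕ) (h : (Fin n → ℝ) → ℝ) (ξ ζ : Fin n → ℝ) :
    taylorRem (α := α) β h ξ ζ = pmultiP β h ξ - polyP α β h ζ ξ := rfl

lemma hasFDerivAt_pmultiP {U : Set (Fin n → ℝ)} (hU : IsOpen U) {α : ℕ} {h : (Fin n → ℝ) → ℝ}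
    (hh : ContDiffOn ℝ ((α:ℕ)) h U) (β : Fin n → ℕ) (hβ : (∑ i, β i) + 1 ≤ α)
    {x : Fin n → ℝ} (hx : x ∈ U) :
    HasFDerivAt (pmultiP β h)
      (∑ i, pmultiP (β + Pi.single i 1) h x •
        (ContinuousLinearMap.proj i : ((Fin n → ℝ)) →L[ℝ] ℝ)) x := by
  have hsm : ContDiffOn ℝ ((1:ℕ)) (pmultiP β h) U :=
    contDiffOn_pmultiP hU β (hh.of_le (by exact_mod_cast (by omega : 1 + ∑ i, β i ≤ α)))
  have hd : DifferentiableAt ℝ (pmultiP β h) x := diffAt_of_contDiffOn hU le_rfl hsm hx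
  refine hd.hasFDerivAt.congr_fderiv (ContinuousLinearMap.ext fun v => ?_)
  rw [fderiv_apply_eq_sum hd v]
  simp only [ContinuousLinearMap.sum_apply, ContinuousLinearMap.smul_apply,
    ContinuousLinearMap.proj_apply, smul_eq_mul]
  exact Finset.sum_congr rfl fun i _ => by
    rw [pdirP_pmultiP hU hh β hβ i hx]; ring

lemma sum_single_nat (i : Fin n) : ∑ j, (Pi.single i 1 : Fin n → ℕ) j = 1 := by
  simp [Pi.single_apply]

lemma single_pi_apply (i j : Fin n) : (Pi.single i 1 : Fin n → ℕ) j = if j = i then 1 else 0 := by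
  by_cases hji : j = i
  · subst hji; simp
  · rw [if_neg hji]; exact Pi.single_eq_of_ne hji 1

lemma sum_reindex {α : ℕ} (hα : 1 ≤ α) (β : Fin n → ℕ) (i : Fin n)
    (h : (Fin n → ℝ) → ℝ) (ζ x : Fin n → ℝ) :
    ∑ k ∈ Sset n α β, (∏ j, ((k j).factorial : ℝ))⁻¹ * pmultiP (β + k) h ζ *
        ((k i : ℝ) * (x i - ζ i) ^ (k i - 1) * ∏ j ∈ Finset.univ.erase i, (x j - ζ j) ^ (k j))
      = ∑ k ∈ Sset n α (β + Pi.single i 1),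
        (∏ j, ((k j).factorial : ℝ))⁻¹ * pmultiP ((β + Pi.single i 1) + k) h ζ *
          ∏ j, (x j - ζ j) ^ (k j) := by
  have hsum_add : ∑ j, (β + Pi.single i 1 : Fin n → ℕ) j = (∑ j, β j) + 1 := by
    simp [Finset.sum_add_distrib, sum_single_nat]
  rw [← Finset.sum_filter_of_ne (p := fun k : Fin n → ℕ => k i ≠ 0)
    (fun k _ hfk => by
      intro hki
      apply hfk
      rw [hki]
      push_cast
      ring)]
  refine Finset.sum_nbij' (fun k => k - Pi.single i 1) (fun k => k + Pi.single i 1)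
    ?_ ?_ ?_ ?_ ?_
  · -- membership forward
    intro k hk
    simp only [Sset, Finset.mem_filter, Finset.mem_Iic, Pi.le_def] at hk ⊢
    obtain ⟨⟨hle, hcond⟩, hki⟩ := hk
    have hki1 : 1 ≤ k i := Nat.one_le_iff_ne_zero.mpr hki
    have hsplit : ∑ j, (k - Pi.single i 1 : Fin n → ℕ) j
        = (k i - 1) + ∑ j ∈ Finset.univ.erase i, k j := by
      rw [← Finset.add_sum_erase _ _ (Finset.mem_univ i)]
      congr 1
      · simp [Pi.sub_apply, Pi.single_eq_same]
      · exact Finset.sum_congr rfl fun j hj => by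
          simp [Pi.sub_apply, Pi.single_eq_of_ne (Finset.ne_of_mem_erase hj)]
    have hksplit : ∑ j, k j = k i + ∑ j ∈ Finset.univ.erase i, k j :=
      (Finset.add_sum_erase _ _ (Finset.mem_univ i)).symm
    constructor
    · intro j
      have hj := hle j
      simp only [Pi.sub_apply]
      omega
    · rw [hsum_add, hsplit]
      omega
  · -- membership backward
    intro k hk
    simp only [Sset, Finset.mem_filter, Finset.mem_Iic, Pi.le_def] at hk ⊢
    obtain ⟨hle, hcond⟩ := hk
    rw [hsum_add] at hcond
    have hki_le : k i ≤ ∑ j, k j :=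
      Finset.single_le_sum (f := fun j => k j) (fun j _ => Nat.zero_le _) (Finset.mem_univ i)
    have hsum_addk : ∑ j, (k + Pi.single i 1 : Fin n → ℕ) j = (∑ j, k j) + 1 := by
      simp [Finset.sum_add_distrib, sum_single_nat]
    refine ⟨⟨fun j => ?_, ?_⟩, ?_⟩
    · have hj := hle j
      simp only [Pi.add_apply, single_pi_apply]
      by_cases hji : j = i
      · subst hji; first | omega | (rw [if_pos rfl]; omega)
      · rw [if_neg hji]; omega
    · rw [hsum_addk]
      omega
    · simp [Pi.add_apply, Pi.single_eq_same]
  · -- left inverse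
    intro k hk
    simp only [Finset.mem_filter] at hk
    have hki1 : 1 ≤ k i := Nat.one_le_iff_ne_zero.mpr hk.2
    funext j
    simp only [Pi.add_apply, Pi.sub_apply, single_pi_apply]
    by_cases hji : j = i
    · subst hji; first | omega | (rw [if_pos rfl]; omega)
    · rw [if_neg hji]; omega
  · -- right inverse
    intro k _
    funext j
    simp only [Pi.add_apply, Pi.sub_apply, single_pi_apply]
    by_cases hji : j = i
    · subst hji; first | omega | (rw [if_pos rfl]; omega)
    · rw [if_neg hji]; omega
  · -- values
    intro k hk
    simp only [Finset.mem_filter] at hk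
    obtain ⟨hkS, hki⟩ := hk
    have hki1 : 1 ≤ k i := Nat.one_le_iff_ne_zero.mpr hki
    have hA : (β + Pi.single i 1) + (k - Pi.single i 1) = β + k := by
      funext j
      simp only [Pi.add_apply, Pi.sub_apply, single_pi_apply]
      by_cases hji : j = i
      · subst hji; first | omega | (rw [if_pos rfl]; omega)
      · rw [if_neg hji]; omega
    have hki' : (k - Pi.single i 1 : Fin n → ℕ) i = k i - 1 := by
      simp [Pi.sub_apply, Pi.single_eq_same]
    have hkj' : ∀ j, j ≠ i → (k - Pi.single i 1 : Fin n → ℕ) j = k j := fun j hj => by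
      simp [Pi.sub_apply, Pi.single_eq_of_ne hj]
    have hB : (∏ j, (x j - ζ j) ^ ((k - Pi.single i 1 : Fin n → ℕ) j))
        = (x i - ζ i) ^ (k i - 1) * ∏ j ∈ Finset.univ.erase i, (x j - ζ j) ^ (k j) := by
      rw [← Finset.mul_prod_erase Finset.univ _ (Finset.mem_univ i), hki']
      congr 1
      exact Finset.prod_congr rfl fun j hj => by rw [hkj' j (Finset.ne_of_mem_erase hj)]
    have herase : (∏ j ∈ Finset.univ.erase i, (((k - Pi.single i 1 : Fin n → ℕ) j).factorial : ℝ))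
        = ∏ j ∈ Finset.univ.erase i, ((k j).factorial : ℝ) :=
      Finset.prod_congr rfl fun j hj => by rw [hkj' j (Finset.ne_of_mem_erase hj)]
    have hFact : ((∏ j, ((k j).factorial : ℝ))⁻¹ * (k i : ℝ))
        = (∏ j, (((k - Pi.single i 1 : Fin n → ℕ) j).factorial : ℝ))⁻¹ := by
      conv_rhs => rw [← Finset.mul_prod_erase Finset.univ _ (Finset.mem_univ i)]
      rw [← Finset.mul_prod_erase Finset.univ (fun j => ((k j).factorial : ℝ))
          (Finset.mem_univ i), herase, hki']
      have hkey : ((k i).factorial : ℝ) = (k i : ℝ) * ((k i - 1).factorial : ℝ) := by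
        exact_mod_cast (Nat.mul_factorial_pred (by omega)).symm
      have h1 : ((k i - 1).factorial : ℝ) ≠ 0 := by
        exact_mod_cast (k i - 1).factorial_ne_zero
      have h2 : (∏ j ∈ Finset.univ.erase i, ((k j).factorial : ℝ)) ≠ 0 :=
        Finset.prod_ne_zero_iff.mpr fun j _ => by exact_mod_cast (k j).factorial_ne_zero
      have h3 : (k i : ℝ) ≠ 0 := by exact_mod_cast hki
      rw [hkey]
      field_simp
    rw [hA, hB, ← hFact]
    ring

lemma hasFDerivAt_polyP {α : ℕ} (hα : 1 ≤ α) (β : Fin n → ℕ) (h : (Fin n → ℝ) → ℝ)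
    (ζ x : Fin n → ℝ) :
    HasFDerivAt (polyP α β h ζ)
      (∑ i, polyP α (β + Pi.single i 1) h ζ x •
        (ContinuousLinearMap.proj i : ((Fin n → ℝ)) →L[ℝ] ℝ)) x := by
  have hmono : ∀ k : Fin n → ℕ, HasFDerivAt (fun ξ : Fin n → ℝ => ∏ j, (ξ j - ζ j) ^ (k j))
      (∑ j, ((∏ m ∈ Finset.univ.erase j, (x m - ζ m) ^ (k m)) *
         ((k j : ℝ) * (x j - ζ j) ^ (k j - 1))) •
        (ContinuousLinearMap.proj j : ((Fin n → ℝ)) →L[ℝ] ℝ)) x := by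
    intro k
    have hfac : ∀ j : Fin n, HasFDerivAt (fun ξ : Fin n → ℝ => (ξ j - ζ j) ^ (k j))
        (((k j : ℝ) * (x j - ζ j) ^ (k j - 1)) •
          (ContinuousLinearMap.proj j : ((Fin n → ℝ)) →L[ℝ] ℝ)) x := by
      intro j
      have hproj : HasFDerivAt (fun ξ : Fin n → ℝ => ξ j - ζ j)
          (ContinuousLinearMap.proj j : ((Fin n → ℝ)) →L[ℝ] ℝ) x := by
        have hp := ((ContinuousLinearMap.proj j :
          ((Fin n → ℝ)) →L[ℝ] ℝ).hasFDerivAt (x := x)).sub_const (ζ j)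
        simpa using hp
      have hpow := HasDerivAt.comp_hasFDerivAt (𝕜 := ℝ) x
        (hasDerivAt_pow (k j) (x j - ζ j)) hproj
      exact hpow
    have h2 := HasFDerivAt.finset_prod (u := (Finset.univ : Finset (Fin n)))
      (fun j _ => hfac j)
    have heq : (∑ j, (∏ m ∈ Finset.univ.erase j, (x m - ζ m) ^ (k m)) •
          (((k j : ℝ) * (x j - ζ j) ^ (k j - 1)) •
            (ContinuousLinearMap.proj j : ((Fin n → ℝ)) →L[ℝ] ℝ)))
        = ∑ j, ((∏ m ∈ Finset.univ.erase j, (x m - ζ m) ^ (k m)) *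
            ((k j : ℝ) * (x j - ζ j) ^ (k j - 1))) •
          (ContinuousLinearMap.proj j : ((Fin n → ℝ)) →L[ℝ] ℝ) :=
      Finset.sum_congr rfl fun j _ => smul_smul _ _ _
    rw [heq] at h2
    exact h2
  have hsum : HasFDerivAt (polyP α β h ζ)
      (∑ k ∈ Sset n α β, ((∏ i, ((k i).factorial : ℝ))⁻¹ * pmultiP (β + k) h ζ) •
        (∑ j, ((∏ m ∈ Finset.univ.erase j, (x m - ζ m) ^ (k m)) *
           ((k j : ℝ) * (x j - ζ j) ^ (k j - 1))) •
          (ContinuousLinearMap.proj j : ((Fin n → ℝ)) →L[ℝ] ℝ))) x := by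
    refine HasFDerivAt.fun_sum fun k _ => ?_
    exact (hmono k).const_mul _
  refine hsum.congr_fderiv ?_
  apply ContinuousLinearMap.ext
  intro v
  simp only [ContinuousLinearMap.sum_apply, ContinuousLinearMap.smul_apply,
    ContinuousLinearMap.proj_apply, smul_eq_mul]
  simp only [Finset.mul_sum]
  rw [Finset.sum_comm]
  refine Finset.sum_congr rfl fun j _ => ?_
  have hre := sum_reindex (hα := hα) β j h ζ x
  calc ∑ k ∈ Sset n α β, (∏ i, ((k i).factorial : ℝ))⁻¹ * pmultiP (β + k) h ζ *
        ((∏ m ∈ Finset.univ.erase j, (x m - ζ m) ^ (k m)) *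
          ((k j : ℝ) * (x j - ζ j) ^ (k j - 1)) * v j)
      = (∑ k ∈ Sset n α β, (∏ i, ((k i).factorial : ℝ))⁻¹ * pmultiP (β + k) h ζ *
          ((k j : ℝ) * (x j - ζ j) ^ (k j - 1) *
            ∏ m ∈ Finset.univ.erase j, (x m - ζ m) ^ (k m))) * v j := by
        rw [Finset.sum_mul]
        exact Finset.sum_congr rfl fun k _ => by ring
    _ = polyP α (β + Pi.single j 1) h ζ x * v j := by rw [hre]; rfl

lemma hasFDerivAt_taylorRem {U : Set (Fin n → ℝ)} (hU : IsOpen U) {α : ℕ} (hα : 1 ≤ α)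
    {h : (Fin n → ℝ) → ℝ} (hh : ContDiffOn ℝ ((α:ℕ)) h U) (β : Fin n → ℕ)
    (hβ : (∑ i, β i) + 1 ≤ α) (ζ : Fin n → ℝ) {x : Fin n → ℝ} (hx : x ∈ U) :
    HasFDerivAt (fun ξ => taylorRem (α := α) β h ξ ζ)
      (∑ i, taylorRem (α := α) (β + Pi.single i 1) h x ζ •
        (ContinuousLinearMap.proj i : ((Fin n → ℝ)) →L[ℝ] ℝ)) x := by
  have h1 := hasFDerivAt_pmultiP hU hh β hβ hx
  have h2 := hasFDerivAt_polyP (α := α) hα β h ζ x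
  have h3 := h1.sub h2
  have heq : (∑ i, taylorRem (α := α) (β + Pi.single i 1) h x ζ •
        (ContinuousLinearMap.proj i : ((Fin n → ℝ)) →L[ℝ] ℝ))
      = (∑ i, pmultiP (β + Pi.single i 1) h x •
          (ContinuousLinearMap.proj i : ((Fin n → ℝ)) →L[ℝ] ℝ))
        - (∑ i, polyP α (β + Pi.single i 1) h ζ x •
          (ContinuousLinearMap.proj i : ((Fin n → ℝ)) →L[ℝ] ℝ)) := by
    rw [← Finset.sum_sub_distrib]
    refine Finset.sum_congr rfl fun i _ => ?_
    rw [taylorRem_eq]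
    first | exact sub_smul _ _ _ | module
  rw [heq]
  exact h3

lemma taylorRem_self {α : ℕ} (β : Fin n → ℕ) (hβ : (∑ i, β i) ≤ α - 1)
    (h : (Fin n → ℝ) → ℝ) (ζ : Fin n → ℝ) : taylorRem (α := α) β h ζ ζ = 0 := by
  rw [taylorRem_eq]
  have hzero : polyP α β h ζ ζ = pmultiP β h ζ := by
    unfold polyP
    rw [Finset.sum_eq_single (fun _ : Fin n => 0)]
    · have hb : β + (fun _ : Fin n => 0) = β := by funext j; simp
      simp [hb]
    · intro k hk hne
      obtain ⟨j, hj⟩ : ∃ j, k j ≠ 0 := by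
        by_contra hall
        push_neg at hall
        exact hne (funext fun j => hall j)
      have hp : (∏ i, (ζ i - ζ i) ^ (k i)) = 0 :=
        Finset.prod_eq_zero (Finset.mem_univ j) (by rw [sub_self]; exact zero_pow hj)
      rw [hp]
      ring
    · intro hnot
      exfalso
      apply hnot
      simp only [Sset, Finset.mem_filter, Finset.mem_Iic, Pi.le_def]
      exact ⟨fun j => Nat.zero_le _, by simpa using hβ⟩
  rw [hzero, sub_self]

lemma norm_sub_le_seg {ζ ξ x : Fin n → ℝ} (hx : x ∈ segment ℝ ζ ξ) : ‖x - ζ‖ ≤ ‖ξ - ζ‖ := by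
  obtain ⟨a, b, ha, hb, hab, rfl⟩ := hx
  have hx2 : a • ζ + b • ξ - ζ = b • (ξ - ζ) := by
    rw [smul_sub]
    rw [show a = 1 - b by linarith]
    rw [sub_smul, one_smul]
    abel
  rw [hx2, norm_smul, Real.norm_eq_abs, abs_of_nonneg hb]
  exact mul_le_of_le_one_left (norm_nonneg _) (by linarith)

lemma taylor_bound {α : ℕ} (hα : 1 ≤ α) {U : Set (Fin n → ℝ)} (hU : IsOpen U)
    {h : (Fin n → ℝ) → ℝ} (hh : ContDiffOn ℝ ((α:ℕ)) h U) {B : ℝ} (hB0 : 0 ≤ B)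
    (hB : ∀ γ : Fin n → ℕ, (∑ i, γ i) ≤ α → ∀ x ∈ U, |pmultiP γ h x| ≤ B)
    {ζ : Fin n → ℝ} (hζ : ζ ∈ U) :
    ∀ (m : ℕ) (β : Fin n → ℕ), (∑ i, β i) ≤ α → α - (∑ i, β i) = m →
      ∀ ξ : Fin n → ℝ, segment ℝ ζ ξ ⊆ U →
        |taylorRem (α := α) β h ξ ζ| ≤ (n:ℝ)^m * B * ‖ξ - ζ‖^m := by
  intro m
  induction m with
  | zero =>
    intro β hβ1 hβ2 ξ hseg
    have hξU : ξ ∈ U := hseg (right_mem_segment ℝ ζ ξ)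
    have hS : Sset n α β = ∅ := by
      rw [Sset, Finset.filter_eq_empty_iff]
      intro k _
      omega
    rw [taylorRem_eq]
    have hz : polyP α β h ζ ξ = 0 := by unfold polyP; rw [hS, Finset.sum_empty]
    rw [hz, sub_zero]
    simpa using hB β hβ1 ξ hξU
  | succ m ih =>
    intro β hβ1 hβ2 ξ hseg
    have hβ' : (∑ i, β i) + 1 ≤ α := by omega
    set L : (Fin n → ℝ) → ((Fin n → ℝ)) →L[ℝ] ℝ := fun y =>
      ∑ i, taylorRem (α := α) (β + Pi.single i 1) h y ζ •
        (ContinuousLinearMap.proj i : ((Fin n → ℝ)) →L[ℝ] ℝ) with hL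
    have hder : ∀ y ∈ segment ℝ ζ ξ,
        HasFDerivWithinAt (fun z => taylorRem (α := α) β h z ζ) (L y) (segment ℝ ζ ξ) y :=
      fun y hy => (hasFDerivAt_taylorRem hU hα hh β hβ' ζ (hseg hy)).hasFDerivWithinAt
    have hsum_add : ∀ i : Fin n, ∑ j, (β + Pi.single i 1 : Fin n → ℕ) j = (∑ j, β j) + 1 :=
      fun i => by simp [Finset.sum_add_distrib, sum_single_nat]
    have hterm : ∀ y ∈ segment ℝ ζ ξ, ∀ i : Fin n,
        |taylorRem (α := α) (β + Pi.single i 1) h y ζ| ≤ (n:ℝ)^m * B * ‖ξ - ζ‖^m := by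
      intro y hy i
      have hsegy : segment ℝ ζ y ⊆ U :=
        Subset.trans ((convex_segment ζ ξ).segment_subset (left_mem_segment ℝ ζ ξ) hy) hseg
      have hih := ih (β + Pi.single i 1) (by rw [hsum_add i]; omega)
        (by rw [hsum_add i]; omega) y hsegy
      refine hih.trans ?_
      have h1 : ‖y - ζ‖ ≤ ‖ξ - ζ‖ := norm_sub_le_seg hy
      have h2 : ‖y - ζ‖^m ≤ ‖ξ - ζ‖^m := pow_le_pow_left₀ (norm_nonneg _) h1 m
      have h3 : (0:ℝ) ≤ (n:ℝ)^m * B := by positivity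
      exact mul_le_mul_of_nonneg_left h2 h3
    have hLb : ∀ y ∈ segment ℝ ζ ξ, ‖L y‖ ≤ (n:ℝ)^(m+1) * B * ‖ξ - ζ‖^m := by
      intro y hy
      refine ContinuousLinearMap.opNorm_le_bound _ (by positivity) fun v => ?_
      rw [hL]
      simp only [ContinuousLinearMap.coe_sum', Finset.sum_apply,
        ContinuousLinearMap.coe_smul', Pi.smul_apply,
        ContinuousLinearMap.proj_apply, smul_eq_mul]
      calc ‖∑ i, taylorRem (α := α) (β + Pi.single i 1) h y ζ * v i‖
          ≤ ∑ i, |taylorRem (α := α) (β + Pi.single i 1) h y ζ * v i| := by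
            rw [Real.norm_eq_abs]
            exact Finset.abs_sum_le_sum_abs _ _
        _ ≤ ∑ _i : Fin n, ((n:ℝ)^m * B * ‖ξ - ζ‖^m) * ‖v‖ := by
            refine Finset.sum_le_sum fun i _ => ?_
            rw [abs_mul]
            have hv : |v i| ≤ ‖v‖ := by
              have hn := norm_le_pi_norm v i
              simpa [Real.norm_eq_abs] using hn
            exact mul_le_mul (hterm y hy i) hv (abs_nonneg _) (by positivity)
        _ = (n:ℝ)^(m+1) * B * ‖ξ - ζ‖^m * ‖v‖ := by
            rw [Finset.sum_const, Finset.card_univ, Fintype.card_fin]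
            push_cast
            ring
    have hmvt := Convex.norm_image_sub_le_of_norm_hasFDerivWithin_le hder hLb
      (convex_segment ζ ξ) (left_mem_segment ℝ ζ ξ) (right_mem_segment ℝ ζ ξ)
    have hmvt' : ‖taylorRem (α := α) β h ξ ζ - taylorRem (α := α) β h ζ ζ‖
        ≤ ((n:ℝ)^(m+1) * B * ‖ξ - ζ‖^m) * ‖ξ - ζ‖ := hmvt
    rw [taylorRem_self β (by omega) h ζ, sub_zero, Real.norm_eq_abs] at hmvt'
    calc |taylorRem (α := α) β h ξ ζ|
        ≤ ((n:ℝ)^(m+1) * B * ‖ξ - ζ‖^m) * ‖ξ - ζ‖ := hmvt'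
      _ = (n:ℝ)^(m+1) * B * ‖ξ - ζ‖^(m+1) := by ring

lemma taylorRem_crude {α : ℕ} (hα : 1 ≤ α) {U : Set (Fin n → ℝ)} {h : (Fin n → ℝ) → ℝ} {B : ℝ}
    (hB0 : 0 ≤ B) (hB : ∀ γ : Fin n → ℕ, (∑ i, γ i) ≤ α → ∀ x ∈ U, |pmultiP γ h x| ≤ B)
    (β : Fin n → ℕ) (hβ : (∑ i, β i) ≤ α - 1) {ξ ζ : Fin n → ℝ} (hξ : ξ ∈ U) (hζ : ζ ∈ U) :
    |taylorRem (α := α) β h ξ ζ|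
      ≤ B * (1 + ((Sset n α β).card : ℝ) * (max 1 ‖ξ - ζ‖)^(α - 1 - ∑ i, β i)) := by
  rw [taylorRem_eq]
  set D := max 1 ‖ξ - ζ‖ with hD
  have hD1 : (1:ℝ) ≤ D := le_max_left _ _
  have hD0 : (0:ℝ) ≤ D := by linarith
  have hterm : ∀ k ∈ Sset n α β,
      |(∏ i, ((k i).factorial : ℝ))⁻¹ * pmultiP (β + k) h ζ * ∏ i, (ξ i - ζ i) ^ (k i)|
        ≤ B * D^(α - 1 - ∑ i, β i) := by
    intro k hk
    simp only [Sset, Finset.mem_filter, Finset.mem_Iic, Pi.le_def] at hk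
    obtain ⟨hle, hcond⟩ := hk
    rw [abs_mul, abs_mul]
    have h1 : |(∏ i, ((k i).factorial : ℝ))⁻¹| ≤ 1 := by
      rw [abs_inv, abs_of_nonneg (by positivity)]
      have hone : (1:ℝ) ≤ ∏ i, ((k i).factorial : ℝ) := by
        have hp := Finset.prod_le_prod (s := Finset.univ) (f := fun _ : Fin n => (1:ℝ))
          (g := fun i => ((k i).factorial : ℝ)) (fun i _ => by norm_num)
          (fun i _ => Nat.one_le_cast.mpr (k i).factorial_pos)
        simpa using hp
      first
        | exact inv_le_one hone
        | exact inv_le_one_of_one_le₀ hone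
        | exact inv_le_one_iff_one_le.mpr hone
    have h2 : |pmultiP (β + k) h ζ| ≤ B := by
      apply hB _ _ ζ hζ
      have hs : ∑ i, (β + k : Fin n → ℕ) i = (∑ i, β i) + ∑ i, k i := by
        simp [Finset.sum_add_distrib]
      omega
    have h3 : |∏ i, (ξ i - ζ i) ^ (k i)| ≤ D^(α - 1 - ∑ i, β i) := by
      rw [Finset.abs_prod]
      calc ∏ i, |(ξ i - ζ i) ^ (k i)| ≤ ∏ i, D ^ (k i) := by
            refine Finset.prod_le_prod (fun i _ => abs_nonneg _) fun i _ => ?_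
            rw [abs_pow]
            refine pow_le_pow_left₀ (abs_nonneg _) ?_ _
            refine le_trans ?_ (le_max_right 1 ‖ξ - ζ‖)
            have hn := norm_le_pi_norm (ξ - ζ) i
            simpa [Real.norm_eq_abs] using hn
        _ = D ^ (∑ i, k i) := Finset.prod_pow_eq_pow_sum _ _ _
        _ ≤ D ^ (α - 1 - ∑ i, β i) := by
            first
              | exact pow_le_pow_right₀ hD1 (by omega)
              | exact pow_le_pow_right_of_le_one hD1 (by omega)
              | exact one_le_pow_iff.mp (by omega)
    calc |(∏ i, ((k i).factorial : ℝ))⁻¹| * |pmultiP (β + k) h ζ| * |∏ i, (ξ i - ζ i) ^ (k i)|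
        ≤ 1 * B * D^(α - 1 - ∑ i, β i) :=
          mul_le_mul (mul_le_mul h1 h2 (abs_nonneg _) (by norm_num)) h3 (abs_nonneg _)
            (by positivity)
      _ = B * D^(α - 1 - ∑ i, β i) := by ring
  have hsum : |polyP α β h ζ ξ| ≤ ((Sset n α β).card : ℝ) * (B * D^(α - 1 - ∑ i, β i)) := by
    unfold polyP
    calc |∑ k ∈ Sset n α β, (∏ i, ((k i).factorial : ℝ))⁻¹ * pmultiP (β + k) h ζ *
          ∏ i, (ξ i - ζ i) ^ (k i)|
        ≤ ∑ k ∈ Sset n α β, |(∏ i, ((k i).factorial : ℝ))⁻¹ * pmultiP (β + k) h ζ *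
          ∏ i, (ξ i - ζ i) ^ (k i)| := Finset.abs_sum_le_sum_abs _ _
      _ ≤ (Sset n α β).card • (B * D^(α - 1 - ∑ i, β i)) :=
          Finset.sum_le_card_nsmul _ _ _ hterm
      _ = ((Sset n α β).card : ℝ) * (B * D^(α - 1 - ∑ i, β i)) := nsmul_eq_mul _ _
  have hpm : |pmultiP β h ξ| ≤ B := hB β (by omega) ξ hξ
  calc |pmultiP β h ξ - polyP α β h ζ ξ|
      ≤ |pmultiP β h ξ| + |polyP α β h ζ ξ| := by
        have := abs_add_le (pmultiP β h ξ) (-(polyP α β h ζ ξ))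
        simpa [sub_eq_add_neg] using this
    _ ≤ B + ((Sset n α β).card : ℝ) * (B * D^(α - 1 - ∑ i, β i)) := add_le_add hpm hsum
    _ = B * (1 + ((Sset n α β).card : ℝ) * D^(α - 1 - ∑ i, β i)) := by ring

end IAR

/-- Core estimate of the Inverse Approximation Lemma: summability of the Taylor
remainders of the KAM iterates with the Whitney-Hölder bound
`∑_j |R_j^β(ξ,ζ)| ≤ C M |ξ-ζ|^(α-|β|₁)`. -/
theorem inverse_approximation_remainder_estimate
    {n α : ℕ} (hα : 1 ≤ α) (l : ℝ) (hl : 0 < l)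
    (r0 θ : ℝ) (hr0 : 0 < r0) (hθ0 : 0 < θ) (hθ1 : θ < 1)
    (s : ℕ → ℝ) (hs_pos : ∀ j, 0 < s j) (hs_dec : ∀ j, s (j + 1) ≤ s j)
    (hs1 : s 1 ≤ 1)
    (c0' : ℝ) (hc0' : 0 < c0')
    (hrs : ∀ j : ℕ, 1 ≤ j → (r0 * θ ^ j) ^ l ≤ c0' * s j ^ α)
    (Pi0 : Set (Fin n → ℝ)) (h : ℕ → (Fin n → ℝ) → ℝ) (M : ℝ) (hM : 0 ≤ M)
    (hsmooth : ∀ j : ℕ, 1 ≤ j →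
      ContDiffOn ℝ α (h j) (Metric.thickening (s j) Pi0))
    (hbound : ∀ j : ℕ, 1 ≤ j → ∀ β : Fin n → ℕ, (∑ i, β i) ≤ α →
      ∀ ξ ∈ Metric.thickening (s j) Pi0, |pmultiP β (h j) ξ| ≤ M * (r0 * θ ^ j) ^ l)
    (β : Fin n → ℕ) (hβ : (∑ i, β i) ≤ α - 1) :
    ∃ C : ℝ, 0 < C ∧ ∀ ξ ∈ Pi0, ∀ ζ ∈ Pi0,
      (∑' j : ℕ, if 1 ≤ j then |taylorRem (α := α) β (h j) ξ ζ| else 0) ≤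
        C * M * ‖ξ - ζ‖ ^ (α - ∑ i, β i) := by
  classical
  set e := α - ∑ i, β i with he
  have he1 : 1 ≤ e := by omega
  set N : ℝ := ((IAR.Sset n α β).card : ℝ) with hN
  have hN0 : 0 ≤ N := by rw [hN]; exact Nat.cast_nonneg _
  set C2 : ℝ := 1 + N with hC2def
  have hC2 : 0 < C2 := by rw [hC2def]; linarith
  set A1 : ℝ := (n:ℝ)^e + C2 with hA1def
  have hA1 : 0 < A1 := by
    rw [hA1def]
    exact add_pos_of_nonneg_of_pos (pow_nonneg (Nat.cast_nonneg n) e) hC2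
  set T : ℝ := θ ^ l with hT
  have hT0 : 0 < T := Real.rpow_pos_of_pos hθ0 l
  have hT1 : T < 1 := Real.rpow_lt_one hθ0.le hθ1 hl
  set G : ℝ := (1 - T)⁻¹ with hG
  have hG0 : 0 < G := inv_pos.mpr (by linarith)
  have hr0l : 0 < r0 ^ l := Real.rpow_pos_of_pos hr0 l
  have hrjl : ∀ j : ℕ, (r0 * θ ^ j) ^ l = r0 ^ l * T ^ j := by
    intro j
    rw [Real.mul_rpow hr0.le (pow_nonneg hθ0.le j)]
    congr 1
    rw [← Real.rpow_natCast θ j, ← Real.rpow_natCast (θ ^ l) j, ← Real.rpow_mul hθ0.le,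
      ← Real.rpow_mul hθ0.le]
    ring_nf
  refine ⟨(A1 * r0 ^ l + C2 * c0') * G,
    mul_pos (add_pos (mul_pos hA1 hr0l) (mul_pos hC2 hc0')) hG0, ?_⟩
  intro ξ hξ ζ hζ
  set d := ‖ξ - ζ‖ with hd
  have hd0 : 0 ≤ d := norm_nonneg _
  set j1 := sInf {j : ℕ | 1 ≤ j ∧ s j ≤ d} with hj1
  set c3 : ℝ := C2 * c0' * M * d ^ e with hc3
  have hc30 : 0 ≤ c3 := by
    rw [hc3]
    exact mul_nonneg (mul_nonneg (mul_nonneg hC2.le hc0'.le) hM) (pow_nonneg hd0 e)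
  set Bf : ℕ → ℝ := fun j => A1 * M * d ^ e * (r0 ^ l * T ^ j) +
    (if j1 ≤ j then c3 * T ^ (j - j1) else 0) with hBf
  have hfirstnn : ∀ j : ℕ, 0 ≤ A1 * M * d ^ e * (r0 ^ l * T ^ j) := fun j =>
    mul_nonneg (mul_nonneg (mul_nonneg hA1.le hM) (pow_nonneg hd0 e))
      (mul_nonneg hr0l.le (pow_nonneg hT0.le j))
  have hifnn : ∀ j : ℕ, (0:ℝ) ≤ (if j1 ≤ j then c3 * T ^ (j - j1) else 0) := by
    intro j
    split
    · exact mul_nonneg hc30 (pow_nonneg hT0.le _)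
    · exact le_refl 0
  have hBf0 : ∀ j, 0 ≤ Bf j := by
    intro j
    rw [hBf]
    exact add_nonneg (hfirstnn j) (hifnn j)
  have key : ∀ j : ℕ, (if 1 ≤ j then |taylorRem (α := α) β (h j) ξ ζ| else 0) ≤ Bf j := by
    intro j
    by_cases hj : 1 ≤ j
    swap
    · rw [if_neg hj]; exact hBf0 j
    rw [if_pos hj]
    simp only [hBf]
    have hζU : ζ ∈ Metric.thickening (s j) Pi0 :=
      Metric.self_subset_thickening (hs_pos j) Pi0 hζ
    have hξU : ξ ∈ Metric.thickening (s j) Pi0 :=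
      Metric.self_subset_thickening (hs_pos j) Pi0 hξ
    have hBj : ∀ γ : Fin n → ℕ, (∑ i, γ i) ≤ α → ∀ x ∈ Metric.thickening (s j) Pi0,
        |pmultiP γ (h j) x| ≤ M * (r0 * θ ^ j) ^ l := hbound j hj
    have hB0j : 0 ≤ M * (r0 * θ ^ j) ^ l :=
      mul_nonneg hM (Real.rpow_nonneg (mul_nonneg hr0.le (pow_nonneg hθ0.le j)) l)
    by_cases hcase : d < s j
    · -- Taylor case
      have hseg : segment ℝ ζ ξ ⊆ Metric.thickening (s j) Pi0 := by
        intro x hxseg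
        have hxd : ‖x - ζ‖ ≤ d := IAR.norm_sub_le_seg hxseg
        rw [Metric.mem_thickening_iff]
        exact ⟨ζ, hζ, by rw [dist_eq_norm]; exact lt_of_le_of_lt hxd hcase⟩
      have ht := IAR.taylor_bound (α := α) hα Metric.isOpen_thickening (hsmooth j hj)
        hB0j hBj hζU e β (by omega) (by omega) ξ hseg
      refine le_trans ht ?_
      rw [hrjl j]
      have hnA : ((n:ℝ))^e ≤ A1 := by rw [hA1def]; linarith
      have h1 : (n:ℝ)^e * (M * (r0 ^ l * T ^ j)) * d ^ e
          ≤ A1 * M * d ^ e * (r0 ^ l * T ^ j) := by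
        calc (n:ℝ)^e * (M * (r0 ^ l * T ^ j)) * d ^ e
            = (n:ℝ)^e * (M * d ^ e * (r0 ^ l * T ^ j)) := by ring
          _ ≤ A1 * (M * d ^ e * (r0 ^ l * T ^ j)) :=
              mul_le_mul_of_nonneg_right hnA (mul_nonneg (mul_nonneg hM (pow_nonneg hd0 e))
                (mul_nonneg hr0l.le (pow_nonneg hT0.le j)))
          _ = A1 * M * d ^ e * (r0 ^ l * T ^ j) := by ring
      exact le_trans h1 (le_add_of_nonneg_right (hifnn j))
    · -- crude case
      push_neg at hcase
      have hjmem : j ∈ {j : ℕ | 1 ≤ j ∧ s j ≤ d} := ⟨hj, hcase⟩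
      have hne : {j : ℕ | 1 ≤ j ∧ s j ≤ d}.Nonempty := ⟨j, hjmem⟩
      have hj1mem : j1 ∈ {j : ℕ | 1 ≤ j ∧ s j ≤ d} := by rw [hj1]; exact Nat.sInf_mem hne
      obtain ⟨h1j1, hsj1d⟩ := hj1mem
      have hj1le : j1 ≤ j := by rw [hj1]; exact Nat.sInf_le hjmem
      have hcr := IAR.taylorRem_crude (α := α) hα hB0j hBj β hβ hξU hζU
      have hsplit : T ^ j = T ^ j1 * T ^ (j - j1) := by
        rw [← pow_add]
        congr 1
        omega
      have he0 : (r0 * θ ^ j) ^ l = (r0 * θ ^ j1) ^ l * T ^ (j - j1) := by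
        rw [hrjl j, hrjl j1, hsplit]; ring
      by_cases hd1 : d ≤ 1
      · have hmax : max 1 d = 1 := max_eq_left hd1
        rw [hmax, one_pow] at hcr
        have hr3 : (r0 * θ ^ j1) ^ l ≤ c0' * s j1 ^ α := hrs j1 h1j1
        have hs4 : s j1 ^ α ≤ d ^ α := by
          first
            | exact pow_le_pow_left (hs_pos j1).le hsj1d α
            | exact pow_le_pow_left₀ (hs_pos j1).le hsj1d α
        have hd5 : d ^ α ≤ d ^ e := pow_le_pow_of_le_one hd0 hd1 (by omega)
        have hkey : (r0 * θ ^ j1) ^ l ≤ c0' * d ^ e := by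
          refine le_trans hr3 ?_
          calc c0' * s j1 ^ α ≤ c0' * d ^ α := mul_le_mul_of_nonneg_left hs4 hc0'.le
            _ ≤ c0' * d ^ e := mul_le_mul_of_nonneg_left hd5 hc0'.le
        have hchain : M * (r0 * θ ^ j) ^ l * (1 + N * 1) ≤ c3 * T ^ (j - j1) := by
          rw [he0, hc3, hC2def]
          calc M * ((r0 * θ ^ j1) ^ l * T ^ (j - j1)) * (1 + N * 1)
              ≤ M * ((c0' * d ^ e) * T ^ (j - j1)) * (1 + N * 1) := by
                have h6 : (0:ℝ) ≤ T ^ (j - j1) := pow_nonneg hT0.le _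
                have h7 : (r0 * θ ^ j1) ^ l * T ^ (j - j1) ≤ c0' * d ^ e * T ^ (j - j1) :=
                  mul_le_mul_of_nonneg_right hkey h6
                have h8 : (0:ℝ) ≤ M * (1 + N * 1) := by
                  have hx : (0:ℝ) ≤ N * 1 := by rw [mul_one]; exact hN0
                  exact mul_nonneg hM (by linarith)
                nlinarith [mul_le_mul_of_nonneg_left h7 hM]
            _ = (1 + N) * c0' * M * d ^ e * T ^ (j - j1) := by ring
        rw [if_pos hj1le]
        exact le_trans (le_trans hcr hchain) (le_add_of_nonneg_left (hfirstnn j))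
      · push_neg at hd1
        have hmax : max 1 d = d := max_eq_right hd1.le
        rw [hmax] at hcr
        have hpow : d ^ (α - 1 - ∑ i, β i) ≤ d ^ e := by
          first
            | exact pow_le_pow_right hd1.le (by omega)
            | exact pow_le_pow_right₀ hd1.le (by omega)
        have h1de : (1:ℝ) ≤ d ^ e := by
          calc (1:ℝ) = 1 ^ e := (one_pow e).symm
            _ ≤ d ^ e := by
                first
                  | exact pow_le_pow_left (by norm_num) hd1.le e
                  | exact pow_le_pow_left₀ (by norm_num) hd1.le e
        have hcr2 : M * (r0 * θ ^ j) ^ l * (1 + N * d ^ (α - 1 - ∑ i, β i))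
            ≤ M * (r0 * θ ^ j) ^ l * (C2 * d ^ e) := by
          have h9 : 1 + N * d ^ (α - 1 - ∑ i, β i) ≤ C2 * d ^ e := by
            rw [hC2def]
            calc 1 + N * d ^ (α - 1 - ∑ i, β i) ≤ d ^ e + N * d ^ e :=
                add_le_add h1de (mul_le_mul_of_nonneg_left hpow hN0)
              _ = (1 + N) * d ^ e := by ring
          exact mul_le_mul_of_nonneg_left h9 hB0j
        refine le_trans (le_trans hcr hcr2) ?_
        rw [hrjl j]
        have hCA : C2 ≤ A1 := by
          rw [hA1def]
          exact le_add_of_nonneg_left (pow_nonneg (Nat.cast_nonneg n) e)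
        have h10 : M * (r0 ^ l * T ^ j) * (C2 * d ^ e)
            ≤ A1 * M * d ^ e * (r0 ^ l * T ^ j) := by
          calc M * (r0 ^ l * T ^ j) * (C2 * d ^ e)
              = C2 * (M * d ^ e * (r0 ^ l * T ^ j)) := by ring
            _ ≤ A1 * (M * d ^ e * (r0 ^ l * T ^ j)) :=
                mul_le_mul_of_nonneg_right hCA (mul_nonneg (mul_nonneg hM (pow_nonneg hd0 e))
                  (mul_nonneg hr0l.le (pow_nonneg hT0.le j)))
            _ = A1 * M * d ^ e * (r0 ^ l * T ^ j) := by ring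
        exact le_trans h10 (le_add_of_nonneg_right (hifnn j))
  have hsum1 : Summable (fun j : ℕ => A1 * M * d ^ e * (r0 ^ l * T ^ j)) :=
    ((summable_geometric_of_lt_one hT0.le hT1).mul_left _).mul_left _
  have hsum2 : Summable (fun j : ℕ => if j1 ≤ j then c3 * T ^ (j - j1) else 0) := by
    have hg : Summable (fun m : ℕ => c3 * T ^ m) :=
      (summable_geometric_of_lt_one hT0.le hT1).mul_left _
    have h2 : Summable (fun m : ℕ =>
        (fun j : ℕ => if j1 ≤ j then c3 * T ^ (j - j1) else 0) (m + j1)) := by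
      refine hg.congr fun m => ?_
      show c3 * T ^ m = if j1 ≤ m + j1 then c3 * T ^ (m + j1 - j1) else 0
      rw [if_pos (Nat.le_add_left _ _), Nat.add_sub_cancel]
    exact (summable_nat_add_iff j1).mp h2
  have hBfsum : Summable Bf := by rw [hBf]; exact hsum1.add hsum2
  have hgsum : Summable (fun j : ℕ => if 1 ≤ j then |taylorRem (α := α) β (h j) ξ ζ| else 0) := by
    refine Summable.of_nonneg_of_le (fun j => ?_) key hBfsum
    by_cases h1j : 1 ≤ j
    · rw [if_pos h1j]; exact abs_nonneg _
    · rw [if_neg h1j]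
  have ht1 : ∑' j : ℕ, A1 * M * d ^ e * (r0 ^ l * T ^ j) = A1 * M * d ^ e * (r0 ^ l * G) := by
    rw [tsum_mul_left, tsum_mul_left, tsum_geometric_of_lt_one hT0.le hT1, hG]
  have ht2 : ∑' j : ℕ, (if j1 ≤ j then c3 * T ^ (j - j1) else 0) = c3 * G := by
    have hinj : Function.Injective (fun m : ℕ => j1 + m) := fun a b hab => by
      simpa using hab
    have hsupp : Function.support (fun j : ℕ => if j1 ≤ j then c3 * T ^ (j - j1) else 0)
        ⊆ Set.range (fun m : ℕ => j1 + m) := by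
      intro j hjsupp
      by_cases hjc : j1 ≤ j
      · exact ⟨j - j1, show j1 + (j - j1) = j by omega⟩
      · exact absurd (show (fun j : ℕ => if j1 ≤ j then c3 * T ^ (j - j1) else 0) j = 0
          from if_neg hjc) (Function.mem_support.mp hjsupp)
    have hcong : ∀ m : ℕ, (fun j : ℕ => if j1 ≤ j then c3 * T ^ (j - j1) else 0) (j1 + m)
        = c3 * T ^ m := by
      intro m
      show (if j1 ≤ j1 + m then c3 * T ^ (j1 + m - j1) else 0) = c3 * T ^ m
      rw [if_pos (Nat.le_add_right _ _), Nat.add_sub_cancel_left]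
    calc (∑' j : ℕ, (if j1 ≤ j then c3 * T ^ (j - j1) else 0))
        = ∑' m : ℕ, (fun j : ℕ => if j1 ≤ j then c3 * T ^ (j - j1) else 0) (j1 + m) :=
          (hinj.tsum_eq hsupp).symm
      _ = ∑' m : ℕ, c3 * T ^ m := tsum_congr hcong
      _ = c3 * G := by rw [tsum_mul_left, tsum_geometric_of_lt_one hT0.le hT1, hG]
  have htB : ∑' j, Bf j = A1 * M * d ^ e * (r0 ^ l * G) + c3 * G := by
    rw [hBf, Summable.tsum_add hsum1 hsum2, ht1, ht2]
  refine le_trans (Summable.tsum_le_tsum key hgsum hBfsum) ?_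
  rw [htB, hc3]
  exact le_of_eq (by ring)
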